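/- arXiv:1307.6881 — 2 statements merged into one kernel-verified Lean document; each statement's English description precedes it below -/
import Mathlib

section
/- Let q ≥ 2 and d₁, d₂ ≥ 1 be integers with gcd(d₁, d₂) = 1. Then there exists an integer c with gcd(c, q−1) = 1 such that gcd(c·d₁ − d₂, q−1) = 2 if q, d₁, d₂ are all odd, and gcd(c·d₁ − d₂, q−1) = 1 otherwise. -/
lemma aux_odd_not_two_dvd {x : ℤ} (h : Odd x) : ¬ (2:ℤ) ∣ x := by
  intro hd
  exact (Int.not_even_iff_odd.mpr h) (even_iff_two_dvd.mpr hd)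

lemma aux_odd_of_mul_left {a b : ℤ} (h : Odd (a * b)) : Odd a := by
  rcases Int.even_or_odd a with he | ho
  · exact absurd (he.mul_right b) (Int.not_even_iff_odd.mpr h)
  · exact ho

lemma aux_odd_coprime_pow {x : ℤ} (s : ℕ) (hx : Odd x) : IsCoprime x ((2:ℤ) ^ s) :=
  ((Int.prime_two.coprime_iff_not_dvd.mpr (aux_odd_not_two_dvd hx)).symm).pow_right

lemma aux_prime_choice {p : ℕ} (hp : p.Prime) (hodd : p ≠ 2) (d₁ d₂ : ℤ)
    (h : IsCoprime d₁ d₂) :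
    ∃ c : ℤ, ¬(p:ℤ) ∣ c ∧ ¬(p:ℤ) ∣ (c * d₁ - d₂) := by
  have hpZ : Prime (p:ℤ) := Nat.prime_iff_prime_int.mp hp
  have h1 : ¬(p:ℤ) ∣ 1 := hpZ.not_dvd_one
  have h2 : ¬(p:ℤ) ∣ 2 := by
    intro hdvd
    have : (p:ℤ) ∣ ((2:ℕ):ℤ) := by exact_mod_cast hdvd
    rw [Int.natCast_dvd_natCast] at this
    exact hodd ((Nat.prime_dvd_prime_iff_eq hp Nat.prime_two).mp this)
  by_cases hpd₁ : (p:ℤ) ∣ d₁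
  · refine ⟨1, h1, fun hd => ?_⟩
    obtain ⟨u, v, huv⟩ := h
    have : (p:ℤ) ∣ d₂ := by
      have := dvd_sub (Dvd.dvd.mul_left hpd₁ 1) hd
      simpa using this
    exact h1 (huv ▸ dvd_add (Dvd.dvd.mul_left hpd₁ u) (Dvd.dvd.mul_left this v))
  · by_cases hdd : (p:ℤ) ∣ (d₁ - d₂)
    · refine ⟨2, h2, fun hd => ?_⟩
      have : (p:ℤ) ∣ d₁ := by
        have := dvd_sub hd hdd
        have h' : 2 * d₁ - d₂ - (d₁ - d₂) = d₁ := by ring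
        rwa [h'] at this
      exact hpd₁ this
    · exact ⟨1, h1, by simpa using hdd⟩

lemma aux_crtZ (a b : ℕ) (hab : Nat.Coprime a b) (c₁ c₂ : ℤ) :
    ∃ c k₁ k₂ : ℤ, c = c₁ + (a:ℤ) * k₁ ∧ c = c₂ + (b:ℤ) * k₂ := by
  have h : IsCoprime (a:ℤ) (b:ℤ) := by
    rw [Int.isCoprime_iff_gcd_eq_one]
    simpa [Int.gcd_natCast_natCast] using hab
  obtain ⟨u, v, huv⟩ := h
  exact ⟨c₁ + (a:ℤ) * (u * (c₂ - c₁)), u * (c₂ - c₁), v * (c₁ - c₂), rfl,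
    by linear_combination (c₂ - c₁) * huv⟩

lemma aux_key : ∀ n : ℕ, Odd n → ∀ d₁ d₂ : ℤ, IsCoprime d₁ d₂ →
    ∃ c : ℤ, IsCoprime c (n:ℤ) ∧ IsCoprime (c * d₁ - d₂) (n:ℤ) := by
  intro n
  induction n using Nat.strong_induction_on with
  | _ n ih =>
  intro hn d₁ d₂ h
  have hn0 : n ≠ 0 := by rintro rfl; simp [Nat.odd_iff] at hn
  have h2n : ¬ 2 ∣ n := by
    intro hd
    have h1 := Nat.odd_iff.mp hn
    omega
  rcases eq_or_ne n 1 with rfl | hn1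
  · exact ⟨1, isCoprime_one_left, by simpa using isCoprime_one_right (x := d₁ - d₂)⟩
  · set p := n.minFac with hpdef
    have hp : p.Prime := Nat.minFac_prime hn1
    have hpn : p ∣ n := Nat.minFac_dvd n
    have hp2 : p ≠ 2 := fun h2 => h2n (h2 ▸ hpn)
    set k := n.factorization p with hkdef
    set t := ordCompl[p] n with htdef
    have hkey : p ^ k * t = n := Nat.ordProj_mul_ordCompl_eq_self n p
    have hcopr : Nat.Coprime p t := Nat.coprime_ordCompl hp hn0
    have hk0 : k ≠ 0 := (hp.factorization_pos_of_dvd hn0 hpn).ne'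
    have ht_lt : t < n :=
      Nat.div_lt_self (Nat.pos_of_ne_zero hn0) (Nat.one_lt_pow hk0 hp.one_lt)
    have ht_odd : Odd t := by
      rcases Nat.even_or_odd t with he | ho
      · exact absurd (he.two_dvd.trans (Nat.ordCompl_dvd n p)) h2n
      · exact ho
    obtain ⟨ct, hct1, hct2⟩ := ih t ht_lt ht_odd d₁ d₂ h
    obtain ⟨cp, hcp1, hcp2⟩ := aux_prime_choice hp hp2 d₁ d₂ h
    obtain ⟨c, k₁, k₂, hc1, hc2⟩ := aux_crtZ (p ^ k) t (hcopr.pow_left _) cp ct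
    have hpZ : Prime (p:ℤ) := Nat.prime_iff_prime_int.mp hp
    have base1 : IsCoprime cp ((p:ℤ) ^ k) :=
      ((hpZ.coprime_iff_not_dvd.mpr hcp1).symm).pow_right
    have base2 : IsCoprime (cp * d₁ - d₂) ((p:ℤ) ^ k) :=
      ((hpZ.coprime_iff_not_dvd.mpr hcp2).symm).pow_right
    have hA : IsCoprime c ((p:ℤ) ^ k) := by
      rw [hc1]; push_cast; exact base1.add_mul_left_left k₁
    have hB : IsCoprime c (t:ℤ) := by
      rw [hc2]; exact hct1.add_mul_left_left k₂
    have hC : IsCoprime (c * d₁ - d₂) ((p:ℤ) ^ k) := by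
      have he : c * d₁ - d₂ = (cp * d₁ - d₂) + (p:ℤ) ^ k * (k₁ * d₁) := by
        rw [hc1]; push_cast; ring
      rw [he]; exact base2.add_mul_left_left _
    have hD : IsCoprime (c * d₁ - d₂) (t:ℤ) := by
      have he : c * d₁ - d₂ = (ct * d₁ - d₂) + (t:ℤ) * (k₂ * d₁) := by
        rw [hc2]; ring
      rw [he]; exact hct2.add_mul_left_left _
    refine ⟨c, ?_, ?_⟩
    · rw [← hkey]; push_cast; exact hA.mul_right hB
    · rw [← hkey]; push_cast; exact hC.mul_right hD

theorem stmt_0 (q d₁ d₂ : ℤ) (hq : 2 ≤ q) (hd₁ : 1 ≤ d₁) (hd₂ : 1 ≤ d₂)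
    (hcop : Int.gcd d₁ d₂ = 1) :
    ∃ c : ℤ, Int.gcd c (q - 1) = 1 ∧
      Int.gcd (c * d₁ - d₂) (q - 1)
        = (if Odd q ∧ Odd d₁ ∧ Odd d₂ then 2 else 1) := by
  have hcop' : IsCoprime d₁ d₂ := Int.isCoprime_iff_gcd_eq_one.mpr hcop
  set M := (q - 1).toNat with hMdef
  have hM : ((M:ℕ):ℤ) = q - 1 := Int.toNat_of_nonneg (by omega)
  have hM0 : M ≠ 0 := by omega
  set s := M.factorization 2 with hsdef
  set t := ordCompl[2] M with htdef
  have hMkey : 2 ^ s * t = M := Nat.ordProj_mul_ordCompl_eq_self M 2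
  have hcoprst : Nat.Coprime (2 ^ s) t :=
    ((Nat.coprime_ordCompl Nat.prime_two hM0).pow_left _)
  have h2t : ¬ 2 ∣ t := by
    intro hd
    have hc : Nat.Coprime 2 t := Nat.coprime_ordCompl Nat.prime_two hM0
    have := Nat.dvd_gcd (dvd_refl 2) hd
    rw [Nat.Coprime] at hc
    omega
  have ht_odd : Odd t := Nat.odd_iff.mpr (by omega)
  obtain ⟨ct, hct1, hct2⟩ := aux_key t ht_odd d₁ d₂ hcop'
  by_cases hsp : Odd q ∧ Odd d₁ ∧ Odd d₂
  · rw [if_pos hsp]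
    obtain ⟨hqodd, hd₁odd, hd₂odd⟩ := hsp
    have h2q : (2:ℤ) ∣ q - 1 := by
      obtain ⟨j, hj⟩ := hqodd; exact ⟨j, by omega⟩
    have h2M : 2 ∣ M := by
      have : (2:ℤ) ∣ ((M:ℕ):ℤ) := by rw [hM]; exact h2q
      exact_mod_cast this
    have hs1 : 1 ≤ s := Nat.Prime.factorization_pos_of_dvd Nat.prime_two hM0 h2M
    obtain ⟨s', hs'⟩ : ∃ s', s = s' + 1 := ⟨s - 1, by omega⟩
    -- inverse of d₁ mod 2^s
    obtain ⟨u, v, huv⟩ := aux_odd_coprime_pow (x := d₁) s hd₁odd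
    -- c₂ := (d₂ + 2) * u
    set c₂ : ℤ := (d₂ + 2) * u with hc₂def
    have hc₂cong : (2:ℤ) ^ s ∣ c₂ * d₁ - d₂ - 2 := by
      refine ⟨-(d₂ + 2) * v, ?_⟩
      have : c₂ * d₁ - d₂ - 2 = (d₂ + 2) * (u * d₁ + v * 2 ^ s - 1) + 2 ^ s * (-(d₂ + 2) * v) := by
        ring
      rw [this, huv]
      ring
    have huodd : Odd u := by
      have : Odd (u * d₁) := by
        have he : u * d₁ = 1 - v * (2 * 2 ^ s') := by
          rw [← huv, hs']; ring
        rw [he]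
        exact (odd_one).sub_even ⟨v * 2 ^ s', by ring⟩
      exact aux_odd_of_mul_left this
    have hc₂odd : Odd c₂ := ((hd₂odd.add_even (by decide)).mul huodd)
    obtain ⟨c, k₁, k₂, hc1, hc2⟩ := aux_crtZ (2 ^ s) t hcoprst c₂ ct
    have hcodd : Odd c := by
      rw [hc1]
      push_cast
      refine hc₂odd.add_even ⟨2 ^ s' * k₁, by rw [hs']; ring⟩
    have hA : IsCoprime c ((2:ℤ) ^ s) := aux_odd_coprime_pow s hcodd
    have hB : IsCoprime c (t:ℤ) := by
      rw [hc2]; exact hct1.add_mul_left_left k₂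
    -- c * d₁ - d₂ = 2 + 2^s * w
    have hcong : (2:ℤ) ^ s ∣ c * d₁ - d₂ - 2 := by
      have he : c * d₁ - d₂ - 2 = (c₂ * d₁ - d₂ - 2) + (2:ℤ) ^ s * (k₁ * d₁) := by
        rw [hc1]; push_cast; ring
      rw [he]
      exact dvd_add hc₂cong ⟨k₁ * d₁, rfl⟩
    obtain ⟨w, hw⟩ := hcong
    set e : ℤ := 1 + 2 ^ s' * w with hedef
    have hde : c * d₁ - d₂ = 2 * e := by
      rw [hedef]
      have : c * d₁ - d₂ = 2 + 2 ^ s * w := by omega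
      rw [this, hs']; ring
    have hqe : q - 1 = 2 * ((2:ℤ) ^ s' * t) := by
      rw [← hM, ← hMkey]
      push_cast
      rw [hs']; ring
    have hEt : IsCoprime e (t:ℤ) := by
      have hD : IsCoprime (c * d₁ - d₂) (t:ℤ) := by
        have he : c * d₁ - d₂ = (ct * d₁ - d₂) + (t:ℤ) * (k₂ * d₁) := by
          rw [hc2]; ring
        rw [he]; exact hct2.add_mul_left_left _
      rw [hde] at hD
      exact hD.of_mul_left_right
    have hE2 : IsCoprime e ((2:ℤ) ^ s') := by
      rcases Nat.eq_zero_or_pos s' with hs0 | hs1'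
      · rw [hs0, pow_zero]; exact isCoprime_one_right
      · refine aux_odd_coprime_pow s' ?_
        obtain ⟨s'', hs''⟩ : ∃ s'', s' = s'' + 1 := ⟨s' - 1, by omega⟩
        exact (odd_one).add_even ⟨2 ^ s'' * w, by rw [hs'']; ring⟩
    refine ⟨c, ?_, ?_⟩
    · rw [← Int.isCoprime_iff_gcd_eq_one, ← hM, ← hMkey]
      push_cast
      exact hA.mul_right hB
    · rw [hde, hqe, Int.gcd_mul_left]
      have : Int.gcd e ((2:ℤ) ^ s' * t) = 1 := by
        rw [← Int.isCoprime_iff_gcd_eq_one]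
        exact hE2.mul_right hEt
      rw [this]
      rfl
  · -- non-special case
    rw [if_neg hsp]
    obtain ⟨c, k₁, k₂, hc1, hc2⟩ := aux_crtZ (2 ^ s) t hcoprst 1 ct
    have hA : IsCoprime c ((2:ℤ) ^ s) := by
      rw [hc1]; push_cast; exact (isCoprime_one_left).add_mul_left_left k₁
    have hB : IsCoprime c (t:ℤ) := by
      rw [hc2]; exact hct1.add_mul_left_left k₂
    have hC : IsCoprime (c * d₁ - d₂) ((2:ℤ) ^ s) := by
      rcases Nat.eq_zero_or_pos s with hs0 | hs1
      · rw [hs0, pow_zero]; exact isCoprime_one_right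
      · -- s ≥ 1 : M even, q odd
        have h2M : 2 ∣ M := by
          rw [← hMkey]; exact Dvd.dvd.mul_right (dvd_pow_self 2 (by omega)) t
        have hqodd : Odd q := by
          have : (2:ℤ) ∣ q - 1 := by
            rw [← hM]; exact_mod_cast h2M
          obtain ⟨j, hj⟩ := this
          exact ⟨j, by omega⟩
        have hnot : ¬ (Odd d₁ ∧ Odd d₂) := fun hod => hsp ⟨hqodd, hod⟩
        -- not both even (coprime)
        have hnotboth : ¬ (Even d₁ ∧ Even d₂) := by
          rintro ⟨⟨a, ha⟩, ⟨b, hb⟩⟩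
          obtain ⟨u, v, huv⟩ := hcop'
          have : (2:ℤ) ∣ 1 := ⟨u * a + v * b, by rw [← huv, ha, hb]; ring⟩
          omega
        have hcodd : Odd c := by
          rw [hc1]
          push_cast
          refine (odd_one).add_even ?_
          obtain ⟨s', hs'⟩ : ∃ s', s = s' + 1 := ⟨s - 1, by omega⟩
          exact ⟨2 ^ s' * k₁, by rw [hs']; ring⟩
        have hodd : Odd (c * d₁ - d₂) := by
          rcases Int.even_or_odd d₁ with he₁ | ho₁
          · rcases Int.even_or_odd d₂ with he₂ | ho₂
            · exact absurd ⟨he₁, he₂⟩ hnotboth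
            · exact (he₁.mul_left c).sub_odd ho₂
          · rcases Int.even_or_odd d₂ with he₂ | ho₂
            · exact (hcodd.mul ho₁).sub_even he₂
            · exact absurd ⟨ho₁, ho₂⟩ hnot
        exact aux_odd_coprime_pow s hodd
    have hD : IsCoprime (c * d₁ - d₂) (t:ℤ) := by
      have he : c * d₁ - d₂ = (ct * d₁ - d₂) + (t:ℤ) * (k₂ * d₁) := by
        rw [hc2]; ring
      rw [he]; exact hct2.add_mul_left_left _
    refine ⟨c, ?_, ?_⟩
    · rw [← Int.isCoprime_iff_gcd_eq_one, ← hM, ← hMkey]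
      push_cast
      exact hA.mul_right hB
    · rw [← Int.isCoprime_iff_gcd_eq_one, ← hM, ← hMkey]
      push_cast
      exact hC.mul_right hD
end

section
/- For integers q ≥ 2 and coprime d₁, d₂ ≥ 1 with d = d₁ + d₂, gcd((q^d − 1)/(q − 1), (q^{d₁} − 1)(q^{d₂} − 1)/(q − 1)) = gcd(d, q − 1). -/
/-- `(q-1) * (1 + q + ... + q^(n-1)) = q^n - 1` in ℕ. -/
lemma aux_geom (q n : ℕ) (hq : 1 ≤ q) :
    (q - 1) * ∑ i ∈ Finset.range n, q ^ i = q ^ n - 1 := by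
  induction n with
  | zero => simp
  | succ n ih =>
      rw [Finset.sum_range_succ, Nat.mul_add, ih]
      have h1 : 1 ≤ q ^ n := Nat.one_le_pow _ _ (by omega)
      have : (q - 1) * q ^ n = q ^ (n + 1) - q ^ n := by
        rw [Nat.sub_mul, one_mul, pow_succ, mul_comm]
      have h2 : q ^ n ≤ q ^ (n + 1) := Nat.pow_le_pow_right (by omega) (Nat.le_succ n)
      rw [this]
      omega

/-- If `p ∣ q - 1` then `1 + q + ... + q^(n-1) ≡ n [MOD p]`. -/
lemma aux_modeq (q n p : ℕ) (hq : 1 ≤ q) (hp : p ∣ q - 1) :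
    (∑ i ∈ Finset.range n, q ^ i) ≡ n [MOD p] := by
  have hq1 : q ≡ 1 [MOD p] := ((Nat.modEq_iff_dvd' hq).mpr hp).symm
  induction n with
  | zero => simp [Nat.ModEq.refl]
  | succ n ih =>
      rw [Finset.sum_range_succ]
      calc (∑ i ∈ Finset.range n, q ^ i) + q ^ n
          ≡ n + 1 ^ n [MOD p] := Nat.ModEq.add ih (hq1.pow n)
        _ = n + 1 := by rw [one_pow]

/-- If a prime `p` divides `q^m - 1` and `q^n - 1` with `gcd m n = 1`, then `p ∣ q - 1`. -/
lemma aux_order (q m n p : ℕ) (hq : 1 ≤ q) (hp : p.Prime)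
    (h1 : p ∣ q ^ m - 1) (h2 : p ∣ q ^ n - 1) (hmn : Nat.gcd m n = 1) :
    p ∣ q - 1 := by
  haveI : Fact p.Prime := ⟨hp⟩
  have key : ∀ k : ℕ, p ∣ q ^ k - 1 → (q : ZMod p) ^ k = 1 := by
    intro k hk
    have hle : 1 ≤ q ^ k := Nat.one_le_pow _ _ (by omega)
    have := (ZMod.natCast_eq_zero_iff _ p).mpr hk
    rw [Nat.cast_sub hle] at this
    push_cast at this
    linear_combination this
  have e1 : (q : ZMod p) ^ m = 1 := key m h1
  have e2 : (q : ZMod p) ^ n = 1 := key n h2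
  have hord : orderOf (q : ZMod p) ∣ Nat.gcd m n :=
    Nat.dvd_gcd (orderOf_dvd_of_pow_eq_one e1) (orderOf_dvd_of_pow_eq_one e2)
  rw [hmn, Nat.dvd_one] at hord
  have hq1 : (q : ZMod p) = 1 := orderOf_eq_one_iff.mp hord
  have : ((q - 1 : ℕ) : ZMod p) = 0 := by
    rw [Nat.cast_sub hq]
    push_cast
    rw [hq1]; ring
  exact (ZMod.natCast_eq_zero_iff _ p).mp this

theorem stmt_7 (q d₁ d₂ : ℕ) (hq : 2 ≤ q) (hd₁ : 1 ≤ d₁) (hd₂ : 1 ≤ d₂)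
    (hcop : Nat.gcd d₁ d₂ = 1) :
    Nat.gcd (∑ i ∈ Finset.range (d₁ + d₂), q ^ i)
        ((q ^ d₁ - 1) * ∑ i ∈ Finset.range d₂, q ^ i)
      = Nat.gcd (d₁ + d₂) (q - 1) := by
  have hq1 : 1 ≤ q := by omega
  set d := d₁ + d₂ with hd
  set A : ℕ := ∑ i ∈ Finset.range d, q ^ i with hA
  set S₁ : ℕ := ∑ i ∈ Finset.range d₁, q ^ i with hS₁
  set S₂ : ℕ := ∑ i ∈ Finset.range d₂, q ^ i with hS₂
  set B : ℕ := (q ^ d₁ - 1) * S₂ with hB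
  have geomA : (q - 1) * A = q ^ d - 1 := aux_geom q d hq1
  have geom1 : (q - 1) * S₁ = q ^ d₁ - 1 := aux_geom q d₁ hq1
  have geom2 : (q - 1) * S₂ = q ^ d₂ - 1 := aux_geom q d₂ hq1
  have hA0 : A ≠ 0 := by
    intro h
    have h2 : (1:ℕ) ≤ q ^ d := Nat.one_le_pow _ _ (by omega)
    have h3 : q ≤ q ^ d := Nat.le_self_pow (by omega) q
    rw [h, Nat.mul_zero] at geomA
    omega
  have hS₁0 : S₁ ≠ 0 := by
    intro h
    have h3 : q ≤ q ^ d₁ := Nat.le_self_pow (by omega) q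
    rw [h, Nat.mul_zero] at geom1
    omega
  have hS₂0 : S₂ ≠ 0 := by
    intro h
    have h3 : q ≤ q ^ d₂ := Nat.le_self_pow (by omega) q
    rw [h, Nat.mul_zero] at geom2
    omega
  have hq0 : q - 1 ≠ 0 := by omega
  have hqd1 : q ^ d₁ - 1 ≠ 0 := by
    have h3 : q ≤ q ^ d₁ := Nat.le_self_pow (by omega) q
    omega
  have hB0 : B ≠ 0 := mul_ne_zero hqd1 hS₂0
  have hG0 : Nat.gcd A B ≠ 0 := fun h => hA0 (Nat.eq_zero_of_gcd_eq_zero_left h)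
  -- Part 1: gcd d (q-1) divides both A and B
  have hgA : Nat.gcd d (q - 1) ∣ A := by
    have h1 : A ≡ d [MOD Nat.gcd d (q - 1)] :=
      aux_modeq q d _ hq1 (Nat.gcd_dvd_right _ _)
    have h2 : Nat.gcd d (q - 1) ∣ d := Nat.gcd_dvd_left _ _
    have h3 : A ≡ 0 [MOD Nat.gcd d (q - 1)] :=
      h1.trans (Nat.modEq_zero_iff_dvd.mpr h2)
    exact Nat.modEq_zero_iff_dvd.mp h3
  have hgB : Nat.gcd d (q - 1) ∣ B := by
    have h1 : Nat.gcd d (q - 1) ∣ q ^ d₁ - 1 :=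
      (Nat.gcd_dvd_right d (q - 1)).trans ⟨S₁, geom1.symm⟩
    exact h1.mul_right S₂
  -- Part 2: gcd A B divides q - 1, via prime factorizations
  have crux : Nat.gcd A B ∣ q - 1 := by
    rw [← Nat.factorization_le_iff_dvd hG0 hq0]
    intro p
    by_cases hp : p.Prime
    · by_cases hpq : p ∣ q - 1
      · by_cases hpd : p ∣ d
        · -- p ∣ d: then p ∤ d₁, d₂, so p ∤ S₁, S₂
          have hpd1 : ¬ p ∣ d₁ := by
            intro h
            have h2 : p ∣ d₂ := by
              have h3 := Nat.dvd_sub hpd h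
              rwa [show d - d₁ = d₂ by omega] at h3
            have h4 := Nat.dvd_gcd h h2
            rw [hcop, Nat.dvd_one] at h4
            exact hp.one_lt.ne' h4
          have hpd2 : ¬ p ∣ d₂ := by
            intro h
            have h2 : p ∣ d₁ := by
              have h3 := Nat.dvd_sub hpd h
              rwa [show d - d₂ = d₁ by omega] at h3
            have h4 := Nat.dvd_gcd h2 h
            rw [hcop, Nat.dvd_one] at h4
            exact hp.one_lt.ne' h4
          have hpS1 : ¬ p ∣ S₁ := by
            intro h
            have h1 : S₁ ≡ d₁ [MOD p] := aux_modeq q d₁ p hq1 hpq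
            have h2 : S₁ ≡ 0 [MOD p] := Nat.modEq_zero_iff_dvd.mpr h
            exact hpd1 (Nat.modEq_zero_iff_dvd.mp (h1.symm.trans h2))
          have hpS2 : ¬ p ∣ S₂ := by
            intro h
            have h1 : S₂ ≡ d₂ [MOD p] := aux_modeq q d₂ p hq1 hpq
            have h2 : S₂ ≡ 0 [MOD p] := Nat.modEq_zero_iff_dvd.mpr h
            exact hpd2 (Nat.modEq_zero_iff_dvd.mp (h1.symm.trans h2))
          have hBeq : B = (q - 1) * S₁ * S₂ := by rw [hB, ← geom1]
          have hdvd : Nat.gcd A B ∣ (q - 1) * S₁ * S₂ := by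
            rw [← hBeq]; exact Nat.gcd_dvd_right _ _
          have hle := (Nat.factorization_le_iff_dvd hG0
            (mul_ne_zero (mul_ne_zero hq0 hS₁0) hS₂0)).mpr hdvd p
          rw [Nat.factorization_mul (mul_ne_zero hq0 hS₁0) hS₂0,
              Nat.factorization_mul hq0 hS₁0] at hle
          simp only [Finsupp.add_apply] at hle
          rw [Nat.factorization_eq_zero_of_not_dvd hpS1,
              Nat.factorization_eq_zero_of_not_dvd hpS2] at hle
          omega
        · -- p ∤ d: then p ∤ A
          have hpA : ¬ p ∣ A := by
            intro h
            have h1 : A ≡ d [MOD p] := aux_modeq q d p hq1 hpq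
            have h2 : A ≡ 0 [MOD p] := Nat.modEq_zero_iff_dvd.mpr h
            exact hpd (Nat.modEq_zero_iff_dvd.mp (h1.symm.trans h2))
          have : (Nat.gcd A B).factorization p ≤ A.factorization p :=
            (Nat.factorization_le_iff_dvd hG0 hA0).mpr (Nat.gcd_dvd_left _ _) p
          rw [Nat.factorization_eq_zero_of_not_dvd hpA] at this
          omega
      · -- p ∤ q - 1: then p ∤ gcd A B
        have hpG : ¬ p ∣ Nat.gcd A B := by
          intro hpG
          have hpA : p ∣ A := hpG.trans (Nat.gcd_dvd_left _ _)
          have hpB : p ∣ B := hpG.trans (Nat.gcd_dvd_right _ _)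
          have hpAd : p ∣ q ^ d - 1 := hpA.trans ⟨q - 1, by rw [← geomA]; ring⟩
          have hcases : p ∣ q ^ d₁ - 1 ∨ p ∣ q ^ d₂ - 1 := by
            rcases (hp.dvd_mul.mp hpB) with h | h
            · exact Or.inl h
            · exact Or.inr (h.trans ⟨q - 1, by rw [← geom2]; ring⟩)
          rcases hcases with h | h
          · exact hpq (aux_order q d d₁ p hq1 hp hpAd h
              (by rw [hd, Nat.add_comm, Nat.gcd_add_self_left, Nat.gcd_comm]
                  exact hcop))
          · exact hpq (aux_order q d d₂ p hq1 hp hpAd h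
              (by rw [hd, Nat.gcd_add_self_left]
                  exact hcop))
        rw [Nat.factorization_eq_zero_of_not_dvd hpG]
        omega
    · simp [Nat.factorization_eq_zero_of_not_prime _ hp]
  -- Part 3: conclude
  have hfinal : Nat.gcd A B ∣ Nat.gcd d (q - 1) := by
    have h1 : Nat.gcd A B ∣ Nat.gcd A (q - 1) :=
      Nat.dvd_gcd (Nat.gcd_dvd_left _ _) crux
    have h2 : Nat.gcd A (q - 1) = Nat.gcd d (q - 1) := by
      have hmod : A % (q - 1) = d % (q - 1) := aux_modeq q d _ hq1 dvd_rfl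
      rw [Nat.gcd_comm A, Nat.gcd_rec (q-1) A, hmod, ← Nat.gcd_rec, Nat.gcd_comm]
    rwa [h2] at h1
  exact Nat.dvd_antisymm hfinal (Nat.dvd_gcd hgA hgB)
end
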